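/- Let Σ and Λ be real d×d positive semidefinite matrices with unit diagonal, and let f_1,…,f_d and g_1,…,g_d be strictly increasing continuous bijections from ℝ to ℝ. Let P be the pushforward of the centered multivariate Gaussian N_d(0, Σ) under the map z ↦ (f_1^{−1}(z_1),…,f_d^{−1}(z_d)), and let Q be the pushforward of N_d(0, Λ) under z ↦ (g_1^{−1}(z_1),…,g_d^{−1}(z_d)). If Σ = Λ and for each j = 1,…,d the pushforward of P under the j-th coordinate projection equals the pushforward of Q under the j-th coordinate projection, then P = Q. That is, a nonparanormal distribution is uniquely determined by its univariate marginal distributions and its latent correlation matrix. -/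

import Mathlib

open MeasureTheory ProbabilityTheory Matrix
open scoped Classical


lemma invFun_continuous_aux {f : ℝ → ℝ} (h1 : StrictMono f) (h3 : Function.Bijective f) :
    Continuous (Function.invFun f) := by
  let e := StrictMono.orderIsoOfSurjective f h1 h3.2
  have hco : ⇑e = f := StrictMono.coe_orderIsoOfSurjective f h1 h3.2
  have heq : Function.invFun f = ⇑e.symm := by
    funext y
    apply h3.1
    rw [Function.rightInverse_invFun h3.2 y]
    have h2 : e (e.symm y) = y := e.apply_symm_apply y
    rw [hco] at h2
    rw [h2]
  rw [heq]
  exact e.symm.continuous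

lemma invFun_le_iff_aux {f : ℝ → ℝ} (h1 : StrictMono f) (h3 : Function.Bijective f)
    (y t : ℝ) : Function.invFun f y ≤ t ↔ y ≤ f t := by
  rw [← h1.le_iff_le, Function.rightInverse_invFun h3.2 y]

lemma gaussianReal_isOpenPos : (gaussianReal 0 1).IsOpenPosMeasure := by
  rw [gaussianReal_of_var_ne_zero 0 one_ne_zero]
  refine ⟨fun U hU hne h => ?_⟩
  rw [withDensity_apply_eq_zero (measurable_gaussianPDF 0 1)] at h
  have : {x : ℝ | gaussianPDF 0 1 x ≠ 0} = Set.univ := by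
    ext x; simp [(gaussianPDF_pos 0 one_ne_zero x).ne']
  rw [this, Set.univ_inter] at h
  exact (hU.measure_ne_zero volume hne) h

/-- The unique positive semidefinite square root of a positive semidefinite real matrix
(junk value `0` if the matrix is not positive semidefinite). -/
noncomputable def psdSqrt {d : ℕ} (M : Matrix (Fin d) (Fin d) ℝ) : Matrix (Fin d) (Fin d) ℝ :=
  if h : M.PosSemidef then
    (h.1.eigenvectorUnitary : Matrix (Fin d) (Fin d) ℝ) *
      diagonal ((RCLike.ofReal : ℝ → ℝ) ∘ Real.sqrt ∘ h.1.eigenvalues) *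
      (star h.1.eigenvectorUnitary : Matrix (Fin d) (Fin d) ℝ)
  else 0

/-- The multivariate Gaussian measure `N_d(m, S)` on ℝ^d with mean `m` and positive
semidefinite covariance `S`, realized as the pushforward of the standard Gaussian
under `x ↦ m + S^{1/2} x`. -/
noncomputable def gaussianPi (d : ℕ) (m : Fin d → ℝ) (S : Matrix (Fin d) (Fin d) ℝ) :
    Measure (Fin d → ℝ) :=
  (Measure.pi fun _ : Fin d => gaussianReal 0 1).map fun x => m + (psdSqrt S).mulVec x

lemma psdSqrt_isHermitian_aux {d : ℕ} (M : Matrix (Fin d) (Fin d) ℝ) (h : M.PosSemidef) :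
    (psdSqrt M).IsHermitian := by
  unfold psdSqrt
  rw [dif_pos h, Matrix.star_eq_conjTranspose]
  exact isHermitian_mul_mul_conjTranspose _ (isHermitian_diagonal _)

lemma psdSqrt_mul_self_aux {d : ℕ} (M : Matrix (Fin d) (Fin d) ℝ) (h : M.PosSemidef) :
    psdSqrt M * psdSqrt M = M := by
  unfold psdSqrt
  rw [dif_pos h]
  have hU : (star h.1.eigenvectorUnitary : Matrix (Fin d) (Fin d) ℝ) *
      (h.1.eigenvectorUnitary : Matrix (Fin d) (Fin d) ℝ) = 1 :=
    Unitary.star_mul_self_of_mem h.1.eigenvectorUnitary.2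
  have hD : diagonal ((RCLike.ofReal : ℝ → ℝ) ∘ Real.sqrt ∘ h.1.eigenvalues) *
      diagonal ((RCLike.ofReal : ℝ → ℝ) ∘ Real.sqrt ∘ h.1.eigenvalues) =
      diagonal ((RCLike.ofReal : ℝ → ℝ) ∘ h.1.eigenvalues) := by
    rw [diagonal_mul_diagonal]
    congr 1
    funext i
    simp [Real.mul_self_sqrt (h.eigenvalues_nonneg i)]
  conv_rhs => rw [h.1.spectral_theorem]
  rw [Unitary.conjStarAlgAut_apply]
  calc _ = (h.1.eigenvectorUnitary : Matrix (Fin d) (Fin d) ℝ) *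
      (diagonal ((RCLike.ofReal : ℝ → ℝ) ∘ Real.sqrt ∘ h.1.eigenvalues) *
      ((star h.1.eigenvectorUnitary : Matrix (Fin d) (Fin d) ℝ) *
      (h.1.eigenvectorUnitary : Matrix (Fin d) (Fin d) ℝ)) *
      diagonal ((RCLike.ofReal : ℝ → ℝ) ∘ Real.sqrt ∘ h.1.eigenvalues)) *
      (star h.1.eigenvectorUnitary : Matrix (Fin d) (Fin d) ℝ) := by
        simp only [Matrix.mul_assoc]
    _ = _ := by rw [hU, Matrix.mul_one, hD]

/-- a nonparanormal distribution is uniquely determined by its univariate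
marginal distributions and its latent correlation matrix. -/
theorem stmt14 (d : ℕ) (S L : Matrix (Fin d) (Fin d) ℝ)
    (hS : S.PosSemidef) (hL : L.PosSemidef)
    (hSd : ∀ j, S j j = 1) (hLd : ∀ j, L j j = 1)
    (f g : Fin d → ℝ → ℝ)
    (hf₁ : ∀ j, StrictMono (f j)) (hf₂ : ∀ j, Continuous (f j))
    (hf₃ : ∀ j, Function.Bijective (f j))
    (hg₁ : ∀ j, StrictMono (g j)) (hg₂ : ∀ j, Continuous (g j))
    (hg₃ : ∀ j, Function.Bijective (g j))
    (P Q : Measure (Fin d → ℝ))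
    (hP : P = (gaussianPi d 0 S).map fun z i => Function.invFun (f i) (z i))
    (hQ : Q = (gaussianPi d 0 L).map fun z i => Function.invFun (g i) (z i))
    (hSL : S = L)
    (hmarg : ∀ j, P.map (fun x => x j) = Q.map (fun x => x j)) :
    P = Q := by
  subst hSL
  -- basic measurability
  have hTc : Continuous (fun x : Fin d → ℝ => (0 : Fin d → ℝ) + (psdSqrt S).mulVec x) := by
    have h1 : Continuous ((psdSqrt S).mulVec) := by
      rw [← Matrix.coe_mulVecLin]
      exact LinearMap.continuous_of_finiteDimensional _
    exact continuous_const.add h1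
  have hTm : Measurable (fun x : Fin d → ℝ => (0 : Fin d → ℝ) + (psdSqrt S).mulVec x) :=
    hTc.measurable
  haveI hprob : IsProbabilityMeasure (gaussianPi d 0 S) := by
    unfold gaussianPi
    exact Measure.isProbabilityMeasure_map hTm.aemeasurable
  have hfg : f = g := by
    funext j t
    set μG : Measure (Fin d → ℝ) := gaussianPi d 0 S with hμG
    have hφm : Measurable (fun z : Fin d → ℝ => fun i => Function.invFun (f i) (z i)) :=
      measurable_pi_lambda _ fun i =>
        ((invFun_continuous_aux (hf₁ i) (hf₃ i)).measurable).comp (measurable_pi_apply i)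
    have hψm : Measurable (fun z : Fin d → ℝ => fun i => Function.invFun (g i) (z i)) :=
      measurable_pi_lambda _ fun i =>
        ((invFun_continuous_aux (hg₁ i) (hg₃ i)).measurable).comp (measurable_pi_apply i)
    -- CDF evaluation
    have cdf_eval : ∀ (u : Fin d → ℝ → ℝ), (∀ i, StrictMono (u i)) →
        (∀ i, Function.Bijective (u i)) →
        ∀ (hum : Measurable fun z : Fin d → ℝ => fun i => Function.invFun (u i) (z i)),
        ((μG.map fun z i => Function.invFun (u i) (z i)).map (fun x => x j)) (Set.Iic t)
          = μG {z | z j ≤ u j t} := by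
      intro u hu1 hu3 hum
      rw [Measure.map_apply (measurable_pi_apply j) measurableSet_Iic,
        Measure.map_apply hum ((measurable_pi_apply j) measurableSet_Iic)]
      congr 1
      ext z
      simp only [Set.mem_preimage, Set.mem_Iic, Set.mem_setOf_eq]
      exact invFun_le_iff_aux (hu1 j) (hu3 j) _ _
    have hEq : μG {z | z j ≤ f j t} = μG {z | z j ≤ g j t} := by
      rw [← cdf_eval f hf₁ hf₃ hφm, ← cdf_eval g hg₁ hg₃ hψm, ← hP, ← hQ, hmarg j]
    -- positivity of slabs
    have hpos : ∀ a b : ℝ, a < b → 0 < μG {z | z j ∈ Set.Ioc a b} := by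
      intro a b hab
      haveI : (gaussianReal (0:ℝ) (1:NNReal)).IsOpenPosMeasure := gaussianReal_isOpenPos
      set piG := (Measure.pi fun _ : Fin d => gaussianReal 0 1) with hpiG
      have hmeasset : MeasurableSet {z : Fin d → ℝ | z j ∈ Set.Ioc a b} :=
        (measurable_pi_apply j) measurableSet_Ioc
      have hmap : μG {z | z j ∈ Set.Ioc a b} =
          piG ((fun x => (0 : Fin d → ℝ) + (psdSqrt S).mulVec x) ⁻¹' {z | z j ∈ Set.Ioc a b}) := by
        rw [hμG]
        unfold gaussianPi
        rw [Measure.map_apply hTm hmeasset]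
      set r : Fin d → ℝ := psdSqrt S j with hr
      have hrr : r ⬝ᵥ r = 1 := by
        have hsym : (psdSqrt S).IsHermitian := psdSqrt_isHermitian_aux S hS
        have hAA : psdSqrt S * psdSqrt S = S := psdSqrt_mul_self_aux S hS
        have : r ⬝ᵥ r = (psdSqrt S * psdSqrt S) j j := by
          rw [Matrix.mul_apply]
          simp only [hr, dotProduct]
          congr 1
          ext k
          congr 1
          have h1 : (psdSqrt S)ᴴ = psdSqrt S := hsym
          conv_lhs => rw [← h1]
          simp [Matrix.conjTranspose_apply]
        rw [this, hAA, hSd j]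
      have hopen : IsOpen {x : Fin d → ℝ | r ⬝ᵥ x ∈ Set.Ioo a b} := by
        have hc : Continuous (fun x : Fin d → ℝ => r ⬝ᵥ x) := by
          unfold dotProduct
          exact continuous_finset_sum _ fun k _ => continuous_const.mul (continuous_apply k)
        exact isOpen_Ioo.preimage hc
      have hnonempty : Set.Nonempty {x : Fin d → ℝ | r ⬝ᵥ x ∈ Set.Ioo a b} := by
        refine ⟨((a + b) / 2) • r, ?_⟩
        simp only [Set.mem_setOf_eq, dotProduct_smul, hrr, smul_eq_mul, mul_one]
        constructor <;> linarith
      have hsub : {x : Fin d → ℝ | r ⬝ᵥ x ∈ Set.Ioo a b} ⊆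
          (fun x => (0 : Fin d → ℝ) + (psdSqrt S).mulVec x) ⁻¹' {z | z j ∈ Set.Ioc a b} := by
        intro x hx
        simp only [Set.mem_setOf_eq, Set.mem_Ioo] at hx
        simp only [Set.mem_preimage, Set.mem_setOf_eq, Pi.add_apply, Pi.zero_apply, zero_add,
          Set.mem_Ioc]
        have : (psdSqrt S).mulVec x j = r ⬝ᵥ x := rfl
        rw [this]
        exact ⟨hx.1, hx.2.le⟩
      calc (0 : ENNReal) < piG {x : Fin d → ℝ | r ⬝ᵥ x ∈ Set.Ioo a b} :=
              hopen.measure_pos piG hnonempty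
        _ ≤ piG ((fun x => (0 : Fin d → ℝ) + (psdSqrt S).mulVec x) ⁻¹' {z | z j ∈ Set.Ioc a b}) :=
              measure_mono hsub
        _ = μG {z | z j ∈ Set.Ioc a b} := hmap.symm
    -- strict monotonicity of the CDF
    have hmono : StrictMono (fun s : ℝ => μG {z | z j ≤ s}) := by
      intro a b hab
      have hsplit : {z : Fin d → ℝ | z j ≤ b} = {z | z j ≤ a} ∪ {z | z j ∈ Set.Ioc a b} := by
        ext z
        simp only [Set.mem_setOf_eq, Set.mem_union, Set.mem_Ioc]
        constructor
        · intro h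
          rcases le_or_gt (z j) a with h' | h'
          · exact Or.inl h'
          · exact Or.inr ⟨h', h⟩
        · rintro (h | ⟨_, h⟩)
          · exact h.trans hab.le
          · exact h
      have hdisj : Disjoint {z : Fin d → ℝ | z j ≤ a} {z | z j ∈ Set.Ioc a b} := by
        rw [Set.disjoint_left]
        intro z hz hz'
        simp only [Set.mem_setOf_eq, Set.mem_Ioc] at hz hz'
        exact absurd hz' (by push_neg; intro h; linarith)
      simp only
      rw [hsplit, measure_union hdisj ((measurable_pi_apply j) measurableSet_Ioc)]
      exact ENNReal.lt_add_right (measure_ne_top μG _) (hpos a b hab).ne'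
    exact hmono.injective hEq
  rw [hP, hQ, hfg]
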